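/- Let (Ω, P) be a probability space with random variables Y¹, Y⁰ : Ω → ℝ (potential outcomes), A : Ω → {0,1} (natural treatment), and L : Ω → 𝓛 (covariates). Define the optimal regime g_opt(l) = argmax_{a∈{0,1}} E[Yᵃ | L=l] and the superoptimal regime g_sup(a',l) = argmax_{a∈{0,1}} E[Yᵃ | A=a', L=l]. Then for every l with P(L=l)>0, E[Y^{g_opt(l)} | L=l] ≤ E[Y^{g_sup(A,l)} | L=l], where Y^{g_sup(A,l)} denotes the random variable ω ↦ Y^{g_sup(A(ω),l)}(ω). -/

import Mathlib

open scoped Classical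
open Finset

noncomputable def pr {Ω : Type*} [Fintype Ω] (p : Ω → ℝ) (E : Ω → Prop) : ℝ :=
  ∑ ω, if E ω then p ω else 0

noncomputable def cex {Ω : Type*} [Fintype Ω] (p : Ω → ℝ) (f : Ω → ℝ) (E : Ω → Prop) : ℝ :=
  (∑ ω, if E ω then p ω * f ω else 0) / pr p E

noncomputable def ex {Ω : Type*} [Fintype Ω] (p : Ω → ℝ) (f : Ω → ℝ) : ℝ :=
  ∑ ω, p ω * f ω

noncomputable def cpr {Ω : Type*} [Fintype Ω] (p : Ω → ℝ) (E F : Ω → Prop) : ℝ :=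
  pr p (fun ω => E ω ∧ F ω) / pr p F

lemma pr_nonneg' {Ω : Type*} [Fintype Ω] (p : Ω → ℝ) (hp : ∀ ω, 0 ≤ p ω) (E : Ω → Prop) :
    0 ≤ pr p E := by
  apply Finset.sum_nonneg
  intro ω _
  split
  · exact hp ω
  · exact le_refl 0

lemma S_le_of_cex {Ω : Type*} [Fintype Ω] (p : Ω → ℝ) (hp : ∀ ω, 0 ≤ p ω)
    (f g : Ω → ℝ) (E : Ω → Prop)
    (h : pr p E > 0 → cex p f E ≤ cex p g E) :
    (∑ ω, if E ω then p ω * f ω else 0) ≤ ∑ ω, if E ω then p ω * g ω else 0 := by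
  have hpr : 0 ≤ pr p E := pr_nonneg' p hp E
  rcases hpr.lt_or_eq with hpos | hzero
  · have hc := h hpos
    unfold cex at hc
    exact (div_le_div_iff_of_pos_right hpos).mp hc
  · -- pr p E = 0, all p ω on E are zero
    have hz : ∀ ω, E ω → p ω = 0 := by
      intro ω hω
      have := (Finset.sum_eq_zero_iff_of_nonneg (fun ω _ => by
        split
        · exact hp ω
        · exact le_refl 0)).mp hzero.symm ω (Finset.mem_univ ω)
      simpa [hω] using this
    have : ∀ (f : Ω → ℝ), (∑ ω, if E ω then p ω * f ω else 0) = 0 := by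
      intro f
      apply Finset.sum_eq_zero
      intro ω _
      by_cases hω : E ω
      · simp [hω, hz ω hω]
      · simp [hω]
    rw [this f, this g]

/-- Superoptimality: the `L`-superoptimal regime is at least as good as the
`L`-optimal regime, conditionally on every value of `L` with positive probability. -/
theorem stmt0
    {Ω 𝓛 : Type*} [Fintype Ω] [Fintype 𝓛]
    (p : Ω → ℝ) (hp : ∀ ω, 0 ≤ p ω) (hsum : ∑ ω, p ω = 1)
    (Y : Bool → Ω → ℝ) (A : Ω → Bool) (L : Ω → 𝓛)
    (gopt : 𝓛 → Bool) (gsup : Bool → 𝓛 → Bool)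
    -- `gopt l` maximizes `a ↦ E[Yᵃ | L = l]`
    (hopt : ∀ l, pr p (fun ω => L ω = l) > 0 →
      ∀ a, cex p (Y a) (fun ω => L ω = l) ≤ cex p (Y (gopt l)) (fun ω => L ω = l))
    -- `gsup a' l` maximizes `a ↦ E[Yᵃ | A = a', L = l]`
    (hsup : ∀ a' l, pr p (fun ω => A ω = a' ∧ L ω = l) > 0 →
      ∀ a, cex p (Y a) (fun ω => A ω = a' ∧ L ω = l) ≤
        cex p (Y (gsup a' l)) (fun ω => A ω = a' ∧ L ω = l)) :
    ∀ l, pr p (fun ω => L ω = l) > 0 →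
      cex p (fun ω => Y (gopt l) ω) (fun ω => L ω = l) ≤
      cex p (fun ω => Y (gsup (A ω) l) ω) (fun ω => L ω = l) := by
  intro l hl
  unfold cex
  apply div_le_div_of_nonneg_right ?_ hl.le
  have key : ∀ (h : Ω → ℝ),
      (∑ ω, if L ω = l then p ω * h ω else 0)
      = ∑ a' : Bool, ∑ ω, if A ω = a' ∧ L ω = l then p ω * h ω else 0 := by
    intro h
    rw [Finset.sum_comm]
    apply Finset.sum_congr rfl
    intro ω _
    by_cases hL : L ω = l
    · simp [hL]
    · simp [hL]
  rw [key (fun ω => Y (gopt l) ω), key (fun ω => Y (gsup (A ω) l) ω)]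
  apply Finset.sum_le_sum
  intro a' _
  have heq : (∑ ω, if A ω = a' ∧ L ω = l then p ω * Y (gsup (A ω) l) ω else 0)
      = ∑ ω, if A ω = a' ∧ L ω = l then p ω * Y (gsup a' l) ω else 0 := by
    apply Finset.sum_congr rfl
    intro ω _
    by_cases hω : A ω = a' ∧ L ω = l
    · rw [if_pos hω, if_pos hω, hω.1]
    · rw [if_neg hω, if_neg hω]
  rw [heq]
  convert S_le_of_cex p hp (Y (gopt l)) (Y (gsup a' l)) _ (fun hpos => hsup a' l hpos (gopt l)) using 4
  rfl
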